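/- For the uniform Bernoulli mixture P = ∫_0^1 P_p dp on {0,1}^ℕ and any finite word w = d_1⋯d_n, the conditioned measure τ_w(P_ℕ) equals ∫_0^1 p^{k}(1-p)^{n-k} P_p dp, where k is the number of 1's in w. Hence V_P = span{∫_0^1 p^k(1-p)^{n-k} P_p dp : 0 ≤ k ≤ n, n ∈ ℕ} has countable algebraic dimension (it is the span of a countable set), whereas span{P_p : p ∈ [0,1]} has no countable spanning set. -/

import Mathlib

open MeasureTheory Filter Topology

/-- One-sided Bernoulli(`p`) product measure on `{0,1}^ℕ`, characterized on cylinders. -/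
def IsBernoulli (p : ℝ) (μ : Measure (ℕ → Bool)) : Prop :=
  IsProbabilityMeasure μ ∧
    ∀ (n : ℕ) (w : Fin n → Bool),
      μ {x | ∀ i : Fin n, x (i : ℕ) = w i} =
        ∏ i : Fin n, (if w i then ENNReal.ofReal p else ENNReal.ofReal (1 - p))

/-- The `n`-fold one-sided shift on `{0,1}^ℕ`. -/
def shiftN (n : ℕ) : (ℕ → Bool) → (ℕ → Bool) := fun x k => x (k + n)

/-- The cylinder set `[w]`. -/
def cylN {n : ℕ} (w : Fin n → Bool) : Set (ℕ → Bool) := {x | ∀ i : Fin n, x (i : ℕ) = w i}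

/-- `τ_w(Q)(B) = Q([w] ∩ σ^{-n} B)`. -/
noncomputable def tauMeas (Q : Measure (ℕ → Bool)) {n : ℕ} (w : Fin n → Bool) :
    Measure (ℕ → Bool) :=
  (Q.restrict (cylN w)).map (shiftN n)

/-- The number of 1's in the word `w`. -/
def ones {n : ℕ} (w : Fin n → Bool) : ℕ := (Finset.univ.filter fun i => w i = true).card

/-- The weak*-realization of a measure as the functional `f ↦ ∫ f dμ`. -/
noncomputable def funcOf (μ : Measure (ℕ → Bool)) : C((ℕ → Bool), ℝ) → ℝ :=
  fun f => ∫ x, f x ∂μ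

/-! ### Auxiliary lemmas -/

lemma measurable_shiftN (n : ℕ) : Measurable (shiftN n) :=
  measurable_pi_lambda _ fun k => measurable_pi_apply (k + n)

lemma measurableSet_cylN {n : ℕ} (w : Fin n → Bool) : MeasurableSet (cylN w) := by
  have h : cylN w = ⋂ i : Fin n, (fun x : ℕ → Bool => x (i : ℕ)) ⁻¹' {w i} := by
    ext x; simp [cylN]
  rw [h]
  exact MeasurableSet.iInter fun i => (measurable_pi_apply _) (measurableSet_singleton _)

/-- The family of initial cylinder sets. -/
def cylFam : Set (Set (ℕ → Bool)) := {s | ∃ (n : ℕ) (w : Fin n → Bool), s = cylN w}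

lemma cyl_inter_of_le {n m : ℕ} (h : n ≤ m) (w : Fin n → Bool) (v : Fin m → Bool)
    (hne : (cylN w ∩ cylN v).Nonempty) : cylN w ∩ cylN v = cylN v := by
  obtain ⟨y, hyw, hyv⟩ := hne
  rw [Set.inter_eq_right]
  intro x hx i
  have h1 : y ((⟨(i : ℕ), lt_of_lt_of_le i.2 h⟩ : Fin m) : ℕ) = v ⟨(i : ℕ), lt_of_lt_of_le i.2 h⟩ :=
    hyv _
  have h2 : x ((⟨(i : ℕ), lt_of_lt_of_le i.2 h⟩ : Fin m) : ℕ) = v ⟨(i : ℕ), lt_of_lt_of_le i.2 h⟩ :=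
    hx _
  have h3 : y (i : ℕ) = w i := hyw i
  simpa using h2.trans (h1.symm.trans h3)

lemma isPiSystem_cylFam : IsPiSystem cylFam := by
  rintro s ⟨n, w, rfl⟩ t ⟨m, v, rfl⟩ hne
  rcases le_total n m with h | h
  · rw [cyl_inter_of_le h w v hne]
    exact ⟨m, v, rfl⟩
  · rw [Set.inter_comm, cyl_inter_of_le h v w (Set.inter_comm _ _ ▸ hne)]
    exact ⟨n, w, rfl⟩

lemma pi_eq_generateFrom_cylFam :
    (inferInstance : MeasurableSpace (ℕ → Bool)) = MeasurableSpace.generateFrom cylFam := by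
  apply le_antisymm
  · have hb : ∀ (i : ℕ) (b : Bool),
        MeasurableSet[MeasurableSpace.generateFrom cylFam] {x : ℕ → Bool | x i = b} := by
      intro i b
      have h : {x : ℕ → Bool | x i = b}
          = ⋃ w ∈ {w : Fin (i + 1) → Bool | w ⟨i, Nat.lt_succ_self i⟩ = b}, cylN w := by
        ext x
        simp only [Set.mem_setOf_eq, Set.mem_iUnion, cylN]
        constructor
        · intro hx
          exact ⟨fun j => x (j : ℕ), hx, fun j => rfl⟩
        · rintro ⟨w, hw, hxw⟩
          have := hxw ⟨i, Nat.lt_succ_self i⟩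
          simpa [hw] using this
      rw [h]
      exact MeasurableSet.biUnion (Set.to_countable _)
        (fun w _ => MeasurableSpace.measurableSet_generateFrom ⟨i + 1, w, rfl⟩)
    have hev : ∀ i : ℕ,
        @Measurable _ _ (MeasurableSpace.generateFrom cylFam) _ (fun x : ℕ → Bool => x i) := by
      intro i s _
      have h : (fun x : ℕ → Bool => x i) ⁻¹' s = ⋃ b ∈ s, {x : ℕ → Bool | x i = b} := by
        ext x; simp
      rw [h]
      exact MeasurableSet.biUnion (Set.to_countable _) fun b _ => hb i b
    exact iSup_le fun i => (@measurable_iff_comap_le _ _ _ _ _).mp (hev i)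
  · exact MeasurableSpace.generateFrom_le (by rintro s ⟨n, w, rfl⟩; exact measurableSet_cylN w)

lemma cyl_append {n m : ℕ} (w : Fin n → Bool) (v : Fin m → Bool) :
    cylN (Fin.append w v) = cylN w ∩ shiftN n ⁻¹' cylN v := by
  ext x
  simp only [cylN, Set.mem_setOf_eq, Set.mem_inter_iff, Set.mem_preimage, shiftN]
  constructor
  · intro h
    refine ⟨fun i => ?_, fun i => ?_⟩
    · have := h (Fin.castAdd m i)
      simpa [Fin.append_left] using this
    · have := h (Fin.natAdd n i)
      simpa [Fin.append_right, Nat.add_comm] using this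
  · rintro ⟨h1, h2⟩ j
    refine Fin.addCases (fun i => ?_) (fun i => ?_) j
    · simpa [Fin.append_left] using h1 i
    · simpa [Fin.append_right, Nat.add_comm] using h2 i

lemma prod_cyl_coeff {n : ℕ} (w : Fin n → Bool) {p : ℝ} (hp : p ∈ Set.Icc (0 : ℝ) 1) :
    (∏ i : Fin n, (if w i then ENNReal.ofReal p else ENNReal.ofReal (1 - p)))
      = ENNReal.ofReal (p ^ ones w * (1 - p) ^ (n - ones w)) := by
  obtain ⟨h0, h1⟩ := hp
  classical
  rw [Finset.prod_ite, Finset.prod_const, Finset.prod_const]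
  have hcard : (Finset.univ.filter fun i : Fin n => ¬ (w i = true)).card = n - ones w := by
    have := Finset.card_filter_add_card_filter_not
      (s := (Finset.univ : Finset (Fin n))) (p := fun i => w i = true)
    simp only [Finset.card_univ, Fintype.card_fin] at this
    unfold ones
    omega
  rw [hcard]
  show ENNReal.ofReal p ^ ones w * ENNReal.ofReal (1 - p) ^ (n - ones w) = _
  rw [ENNReal.ofReal_mul (pow_nonneg h0 _), ENNReal.ofReal_pow h0,
    ENNReal.ofReal_pow (by linarith)]

lemma bernoulli_cond {p : ℝ} (hp : p ∈ Set.Icc (0 : ℝ) 1) {ν : Measure (ℕ → Bool)}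
    (hν : IsBernoulli p ν) {n : ℕ} (w : Fin n → Bool) (B : Set (ℕ → Bool))
    (hBm : MeasurableSet B) :
    ν (cylN w ∩ shiftN n ⁻¹' B)
      = ENNReal.ofReal (p ^ ones w * (1 - p) ^ (n - ones w)) * ν B := by
  obtain ⟨hprob, hcyl⟩ := hν
  set c : ENNReal := ENNReal.ofReal (p ^ ones w * (1 - p) ^ (n - ones w)) with hc
  have hwc : ν (cylN w) = c := by
    rw [hc, ← prod_cyl_coeff w hp]
    exact hcyl n w
  have key : (ν.restrict (cylN w)).map (shiftN n) = c • ν := by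
    haveI : IsFiniteMeasure ((ν.restrict (cylN w)).map (shiftN n)) := by
      constructor
      rw [Measure.map_apply (measurable_shiftN n) MeasurableSet.univ]
      simp only [Set.preimage_univ]
      rw [Measure.restrict_apply MeasurableSet.univ, Set.univ_inter]
      exact lt_of_le_of_lt (measure_mono (Set.subset_univ _)) (measure_lt_top ν _)
    refine ext_of_generate_finite cylFam pi_eq_generateFrom_cylFam isPiSystem_cylFam ?_ ?_
    · rintro s ⟨m, v, rfl⟩
      rw [Measure.map_apply (measurable_shiftN n) (measurableSet_cylN v),
        Measure.restrict_apply ((measurable_shiftN n) (measurableSet_cylN v)),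
        Set.inter_comm, ← cyl_append]
      have h1 : ν (cylN (Fin.append w v))
          = ∏ i : Fin (n + m), (if Fin.append w v i then ENNReal.ofReal p
              else ENNReal.ofReal (1 - p)) := hcyl (n + m) (Fin.append w v)
      rw [h1, Fin.prod_univ_add]
      simp only [Fin.append_left, Fin.append_right]
      rw [prod_cyl_coeff w hp, ← hc]
      have h2 : ν (cylN v)
          = ∏ i : Fin m, (if v i then ENNReal.ofReal p else ENNReal.ofReal (1 - p)) := hcyl m v
      rw [Measure.smul_apply, smul_eq_mul, h2]
    · rw [Measure.map_apply (measurable_shiftN n) MeasurableSet.univ]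
      simp only [Set.preimage_univ]
      rw [Measure.restrict_apply MeasurableSet.univ, Set.univ_inter, hwc,
        Measure.smul_apply, smul_eq_mul, measure_univ, mul_one]
  calc ν (cylN w ∩ shiftN n ⁻¹' B)
      = ν (shiftN n ⁻¹' B ∩ cylN w) := by rw [Set.inter_comm]
    _ = (ν.restrict (cylN w)) (shiftN n ⁻¹' B) := by
        rw [Measure.restrict_apply ((measurable_shiftN n) hBm)]
    _ = ((ν.restrict (cylN w)).map (shiftN n)) B := by
        rw [Measure.map_apply (measurable_shiftN n) hBm]
    _ = c * ν B := by rw [key, Measure.smul_apply, smul_eq_mul]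

/-- The continuous indicator of the "all ones" cylinder of length `n`. -/
def indF (n : ℕ) : C((ℕ → Bool), ℝ) :=
  ⟨fun x => ∏ i : Fin n, (if x (i : ℕ) then (1 : ℝ) else 0),
    continuous_finset_prod _ fun i _ =>
      (continuous_of_discreteTopology (f := fun b : Bool => if b then (1 : ℝ) else 0)).comp
        (continuous_apply (i : ℕ))⟩

lemma indF_eq_indicator (n : ℕ) (x : ℕ → Bool) :
    indF n x = (cylN (fun _ : Fin n => true)).indicator (fun _ => (1 : ℝ)) x := by
  by_cases h : x ∈ cylN (fun _ : Fin n => true)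
  · have hx : ∀ i : Fin n, x (i : ℕ) = true := h
    simp [indF, Set.indicator_of_mem h, hx]
  · rw [Set.indicator_of_notMem h]
    simp only [cylN, Set.mem_setOf_eq, not_forall] at h
    obtain ⟨i, hi⟩ := h
    have hxi : x (i : ℕ) = false := by
      cases hxi : x (i : ℕ)
      · rfl
      · exact absurd hxi hi
    exact Finset.prod_eq_zero (Finset.mem_univ i) (by simp [hxi])

lemma integral_indF {p : ℝ} (hp : p ∈ Set.Icc (0 : ℝ) 1) {ν : Measure (ℕ → Bool)}
    (hν : IsBernoulli p ν) (n : ℕ) : ∫ x, indF n x ∂ν = p ^ n := by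
  obtain ⟨hprob, hcyl⟩ := hν
  have h1 : ∫ x, indF n x ∂ν
      = ∫ x, (cylN (fun _ : Fin n => true)).indicator (fun _ => (1 : ℝ)) x ∂ν := by
    exact integral_congr_ae (Filter.Eventually.of_forall fun x => indF_eq_indicator n x)
  rw [h1]
  have h2 : ∫ x, (cylN (fun _ : Fin n => true)).indicator (fun _ => (1 : ℝ)) x ∂ν
      = (ν (cylN (fun _ : Fin n => true))).toReal :=
    integral_indicator_one (measurableSet_cylN _)
  rw [h2]
  have h3 : ν (cylN (fun _ : Fin n => true)) = ENNReal.ofReal (p ^ n) := by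
    have := hcyl n (fun _ => true)
    simp only [if_true] at this
    rw [show cylN (fun _ : Fin n => true) = {x | ∀ i : Fin n, x (i : ℕ) = true} from rfl]
    rw [this, Finset.prod_const, Finset.card_univ, Fintype.card_fin,
      ENNReal.ofReal_pow hp.1]
  rw [h3, ENNReal.toReal_ofReal (pow_nonneg hp.1 n)]

/-- Evaluation of functionals on the test functions `indF`. -/
def evalF : (C((ℕ → Bool), ℝ) → ℝ) →ₗ[ℝ] (Multiplicative ℕ → ℝ) where
  toFun g := fun m => g (indF m.toAdd)
  map_add' _ _ := rfl
  map_smul' _ _ := rfl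

/-- For the uniform Bernoulli mixture `P_ℕ = ∫_0^1 P_p dp` and a word `w` of
length `n` with `k` ones, `τ_w(P_ℕ) = ∫_0^1 p^k (1-p)^{n-k} P_p dp`.  Hence the canonical OOM
vector space `V_P` is the span of a countable set, whereas `span{P_p : p ∈ [0,1]}` has no
countable spanning set. -/
theorem stmt17 (νB : ℝ → Measure (ℕ → Bool))
    (hB : ∀ p ∈ Set.Icc (0 : ℝ) 1, IsBernoulli p (νB p))
    (Pn : Measure (ℕ → Bool)) [IsProbabilityMeasure Pn]
    (hPn : ∀ B : Set (ℕ → Bool), MeasurableSet B →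
      Pn B = ∫⁻ p in Set.Icc (0 : ℝ) 1, νB p B) :
    -- the conditioned measures are mixtures with polynomial densities
    (∀ (n : ℕ) (w : Fin n → Bool) (B : Set (ℕ → Bool)), MeasurableSet B →
      tauMeas Pn w B =
        ∫⁻ p in Set.Icc (0 : ℝ) 1,
          ENNReal.ofReal (p ^ (ones w) * (1 - p) ^ (n - ones w)) * νB p B) ∧
    -- V_P has a countable spanning set
    (∃ S : Set (C((ℕ → Bool), ℝ) → ℝ), S.Countable ∧
      Submodule.span ℝ {g | ∃ (n : ℕ) (w : Fin n → Bool), g = funcOf (tauMeas Pn w)} =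
        Submodule.span ℝ S) ∧
    -- span{P_p : p ∈ [0,1]} has no countable spanning set
    ¬ ∃ S : Set (C((ℕ → Bool), ℝ) → ℝ), S.Countable ∧
      Submodule.span ℝ ((fun p => funcOf (νB p)) '' Set.Icc (0 : ℝ) 1) =
        Submodule.span ℝ S := by
  refine ⟨?_, ?_, ?_⟩
  · -- Part 1: the mixture identity
    intro n w B hBm
    have hmeas : MeasurableSet (cylN w ∩ shiftN n ⁻¹' B) :=
      (measurableSet_cylN w).inter ((measurable_shiftN n) hBm)
    have h1 : tauMeas Pn w B = Pn (cylN w ∩ shiftN n ⁻¹' B) := by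
      unfold tauMeas
      rw [Measure.map_apply (measurable_shiftN n) hBm,
        Measure.restrict_apply ((measurable_shiftN n) hBm), Set.inter_comm]
    rw [h1, hPn _ hmeas]
    refine setLIntegral_congr_fun measurableSet_Icc
      (fun p hp => ?_)
    exact bernoulli_cond hp (hB p hp) w B hBm
  · -- Part 2: countable spanning set for V_P
    refine ⟨{g | ∃ (n : ℕ) (w : Fin n → Bool), g = funcOf (tauMeas Pn w)}, ?_, rfl⟩
    have h : {g | ∃ (n : ℕ) (w : Fin n → Bool), g = funcOf (tauMeas Pn w)}
        = ⋃ n : ℕ, Set.range fun w : Fin n → Bool => funcOf (tauMeas Pn w) := by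
      ext g
      simp only [Set.mem_setOf_eq, Set.mem_iUnion, Set.mem_range]
      constructor
      · rintro ⟨n, w, rfl⟩; exact ⟨n, w, rfl⟩
      · rintro ⟨n, w, rfl⟩; exact ⟨n, w, rfl⟩
    rw [h]
    exact Set.countable_iUnion fun n => Set.countable_range _
  · -- Part 3: no countable spanning set for span{P_p}
    rintro ⟨S, hS, hspan⟩
    -- the family p ↦ funcOf (νB p) is linearly independent
    have h2 : evalF ∘ (fun q : ↥(Set.Icc (0 : ℝ) 1) => funcOf (νB q))
        = fun q : ↥(Set.Icc (0 : ℝ) 1) => ((powersHom ℝ (q : ℝ)) : Multiplicative ℕ → ℝ) := by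
      funext q
      funext m
      show funcOf (νB q) (indF m.toAdd) = (powersHom ℝ (q : ℝ)) m
      rw [powersHom_apply]
      exact integral_indF q.2 (hB q q.2) m.toAdd
    have h1 : LinearIndependent ℝ
        (fun q : ↥(Set.Icc (0 : ℝ) 1) => ((powersHom ℝ (q : ℝ)) : Multiplicative ℕ → ℝ)) :=
      (linearIndependent_monoidHom (Multiplicative ℕ) ℝ).comp
        (fun q : ↥(Set.Icc (0 : ℝ) 1) => powersHom ℝ (q : ℝ))
        ((powersHom ℝ).injective.comp Subtype.val_injective)
    have hli : LinearIndependent ℝ (fun q : ↥(Set.Icc (0 : ℝ) 1) => funcOf (νB q)) :=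
      LinearIndependent.of_comp evalF (h2 ▸ h1)
    have hmem : ∀ q : ↥(Set.Icc (0 : ℝ) 1), funcOf (νB q) ∈ Submodule.span ℝ S := by
      intro q
      rw [← hspan]
      exact Submodule.subset_span ⟨(q : ℝ), q.2, rfl⟩
    have hli' : LinearIndependent ℝ
        (fun q : ↥(Set.Icc (0 : ℝ) 1) => (⟨funcOf (νB q), hmem q⟩ : ↥(Submodule.span ℝ S))) :=
      LinearIndependent.of_comp (Submodule.span ℝ S).subtype hli
    have hr1 : Cardinal.mk ↥(Set.Icc (0 : ℝ) 1) ≤ Module.rank ℝ ↥(Submodule.span ℝ S) :=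
      hli'.cardinal_le_rank
    have hr2 : Module.rank ℝ ↥(Submodule.span ℝ S) ≤ Cardinal.mk S := rank_span_le S
    have hr3 : Cardinal.mk S ≤ Cardinal.aleph0 := by
      haveI := hS.to_subtype
      exact Cardinal.mk_le_aleph0
    have hcon : Cardinal.continuum ≤ Cardinal.aleph0 := by
      rw [← Cardinal.mk_Icc_real (zero_lt_one (α := ℝ))]
      exact hr1.trans (hr2.trans hr3)
    exact absurd hcon (not_le.mpr Cardinal.aleph0_lt_continuum)
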